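/- Let A ⋊^σ G be a skew groupoid ring with G a groupoid with finitely many objects, all A_e equal to a fixed integral domain, and each isotropy group G_e abelian. Then A is maximal commutative in A ⋊^σ G if and only if every nonzero twosided ideal of A ⋊^σ G has nonzero intersection with A. -/

import Mathlib

open CategoryTheory

/-- The type of morphisms of a category `G`, bundled with domain and codomain. -/
abbrev CMor (G : Type*) [Category G] := Σ e f : G, e ⟶ f

/-- Transport along an equality of objects, as a ring homomorphism. -/
def castRH {G : Type*} (A : G → Type*) [∀ e, Ring (A e)]
    {e f : G} (h : e = f) : A e →+* A f := by subst h; exact RingHom.id _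

/-- The carrier of the category crossed product `A ⋊_α^σ G`: finitely supported
formal sums `Σ_s a_s u_s` with `a_s ∈ A_{c(s)}`. -/
abbrev CP {G : Type*} [Category G] (A : G → Type*) [∀ e, Ring (A e)] :=
  Π₀ p : CMor G, A p.2.1

open Classical in
/-- The multiplication of the category crossed product:
`(a u_s)(b u_t) = a σ_s(b) α(s,t) u_{st}` when `d(s) = c(t)`, else `0`. -/
noncomputable def catMul {G : Type*} [Category G] {A : G → Type*} [∀ e, Ring (A e)]
    (σ : ∀ e f : G, (e ⟶ f) → (A e →+* A f))
    (α : ∀ e f g : G, (f ⟶ g) → (e ⟶ f) → A g)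
    (x y : CP A) : CP A :=
  x.sum fun p a => y.sum fun q b =>
    if h : q.2.1 = p.1 then
      DFinsupp.single (⟨q.1, p.2.1, (q.2.2 ≫ eqToHom h) ≫ p.2.2⟩ : CMor G)
        (a * σ p.1 p.2.1 p.2.2 (castRH A h b) * α q.1 p.1 p.2.1 p.2.2 (q.2.2 ≫ eqToHom h))
    else 0

open Classical in
/-- `a u_s`, the formal sum supported on a single morphism. -/
noncomputable def catSingle {G : Type*} [Category G] {A : G → Type*} [∀ e, Ring (A e)]
    (p : CMor G) (a : A p.2.1) : CP A := DFinsupp.single p a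

/-- `I` is a twosided ideal of the category crossed product `A ⋊_α^σ G`. -/
def IsCrossedIdeal {G : Type*} [Category G] {A : G → Type*} [∀ e, Ring (A e)]
    (σ : ∀ e f : G, (e ⟶ f) → (A e →+* A f))
    (α : ∀ e f g : G, (f ⟶ g) → (e ⟶ f) → A g)
    (I : Set (CP A)) : Prop :=
  (0 : CP A) ∈ I ∧ (∀ x y, x ∈ I → y ∈ I → x + y ∈ I) ∧ (∀ x, x ∈ I → -x ∈ I) ∧
    ∀ x r, x ∈ I → catMul σ α r x ∈ I ∧ catMul σ α x r ∈ I


set_option linter.unusedSectionVars false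
open Classical

section Dev
variable {G : Type*} [Groupoid G] {D : Type*} [CommRing D]
variable (σ : ∀ e f : G, (e ⟶ f) → (D →+* D))

@[simp] lemma castRH_const_apply {e f : G} (h : e = f) (b : D) :
    castRH (fun _ : G => D) h b = b := by subst h; rfl

/-- specialized multiplication -/
noncomputable def cmul (x y : CP (fun _ : G => D)) : CP (fun _ : G => D) :=
  catMul (A := fun _ : G => D) σ (fun _ _ _ _ _ => 1) x y

lemma cmul_eq (x y : CP (fun _ : G => D)) :
    cmul σ x y = x.sum fun p a => y.sum fun q b =>
      if h : q.2.1 = p.1 then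
        DFinsupp.single (⟨q.1, p.2.1, (q.2.2 ≫ eqToHom h) ≫ p.2.2⟩ : CMor G)
          (a * σ p.1 p.2.1 p.2.2 b)
      else 0 := by
  unfold cmul catMul
  simp only [castRH_const_apply, mul_one]

lemma cmor_mk_inj {e f : G} {m m' : e ⟶ f} (h : (⟨e, f, m⟩ : CMor G) = ⟨e, f, m'⟩) :
    m = m' := by
  have h2 := (Sigma.mk.inj_iff.mp h).2
  have h3 := (Sigma.mk.inj_iff.mp (eq_of_heq h2)).2
  exact eq_of_heq h3

lemma cmor_mk_congr {e f : G} {m m' : e ⟶ f} (h : m = m') :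
    (⟨e, f, m⟩ : CMor G) = ⟨e, f, m'⟩ := by rw [h]

lemma cmul_single_right (x : CP (fun _ : G => D)) (q : CMor G) (b : D) :
    cmul σ x (DFinsupp.single q b) = x.sum fun p a =>
      if h : q.2.1 = p.1 then
        DFinsupp.single (⟨q.1, p.2.1, (q.2.2 ≫ eqToHom h) ≫ p.2.2⟩ : CMor G)
          (a * σ p.1 p.2.1 p.2.2 b)
      else 0 := by
  rw [cmul_eq]
  refine Finset.sum_congr rfl fun p _ => ?_
  refine DFinsupp.sum_single_index ?_
  split <;> simp

lemma cmul_single_left (y : CP (fun _ : G => D)) (p : CMor G) (a : D) :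
    cmul σ (DFinsupp.single p a) y = y.sum fun q b =>
      if h : q.2.1 = p.1 then
        DFinsupp.single (⟨q.1, p.2.1, (q.2.2 ≫ eqToHom h) ≫ p.2.2⟩ : CMor G)
          (a * σ p.1 p.2.1 p.2.2 b)
      else 0 := by
  rw [cmul_eq]
  refine DFinsupp.sum_single_index ?_
  refine Finset.sum_eq_zero fun q _ => ?_
  dsimp only
  split <;> simp


lemma cmul_apply_id_right (x : CP (fun _ : G => D)) (e : G) (a : D) (r : CMor G) :
    cmul σ x (DFinsupp.single ⟨e, e, 𝟙 e⟩ a) r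
      = if r.1 = e then x r * σ r.1 r.2.1 r.2.2 a else 0 := by
  rw [cmul_single_right, DFinsupp.sum_apply, DFinsupp.sum]
  have key : ∀ p : CMor G,
      ((if h : e = p.1 then
        DFinsupp.single (⟨e, p.2.1, ((𝟙 e) ≫ eqToHom h) ≫ p.2.2⟩ : CMor G)
          (x p * σ p.1 p.2.1 p.2.2 a)
      else 0) : CP (fun _ : G => D)) =
      (if p.1 = e then DFinsupp.single p (x p * σ p.1 p.2.1 p.2.2 a) else 0) := by
    rintro ⟨p1, p2, pm⟩
    by_cases h : e = p1
    · subst h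
      simp
    · simp [h, Ne.symm h]
  have hsum : (∑ p ∈ x.support, ((if h : e = p.1 then
        DFinsupp.single (⟨e, p.2.1, ((𝟙 e) ≫ eqToHom h) ≫ p.2.2⟩ : CMor G)
          (x p * σ p.1 p.2.1 p.2.2 a)
      else 0) : CP (fun _ : G => D)) r)
      = ((if r.1 = e then DFinsupp.single r (x r * σ r.1 r.2.1 r.2.2 a) else 0)
          : CP (fun _ : G => D)) r := by
    refine (Finset.sum_eq_single r (fun p hp hpr => ?_) (fun hr => ?_)).trans ?_
    · rw [key p]
      split
      · exact DFinsupp.single_eq_of_ne hpr.symm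
      · rfl
    · have : x r = 0 := DFinsupp.notMem_support_iff.mp hr
      rw [key r]
      split <;> simp [this]
    · rw [key r]
  rw [hsum]
  split
  · exact DFinsupp.single_eq_same
  · rfl

lemma cmul_apply_id_left (hσ1 : ∀ e : G, σ e e (𝟙 e) = RingHom.id D)
    (x : CP (fun _ : G => D)) (e : G) (a : D) (r : CMor G) :
    cmul σ (DFinsupp.single ⟨e, e, 𝟙 e⟩ a) x r
      = if r.2.1 = e then a * x r else 0 := by
  rw [cmul_single_left, DFinsupp.sum_apply, DFinsupp.sum]
  have key : ∀ q : CMor G,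
      ((if h : q.2.1 = e then
        DFinsupp.single (⟨q.1, e, (q.2.2 ≫ eqToHom h) ≫ 𝟙 e⟩ : CMor G)
          (a * σ e e (𝟙 e) (x q))
      else 0) : CP (fun _ : G => D)) =
      (if q.2.1 = e then DFinsupp.single q (a * x q) else 0) := by
    rintro ⟨q1, q2, qm⟩
    by_cases h : q2 = e
    · subst h
      simp [hσ1]
    · simp [h]
  have hsum : (∑ q ∈ x.support, ((if h : q.2.1 = e then
        DFinsupp.single (⟨q.1, e, (q.2.2 ≫ eqToHom h) ≫ 𝟙 e⟩ : CMor G)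
          (a * σ e e (𝟙 e) (x q))
      else 0) : CP (fun _ : G => D)) r)
      = ((if r.2.1 = e then DFinsupp.single r (a * x r) else 0) : CP (fun _ : G => D)) r := by
    refine (Finset.sum_eq_single r (fun q hq hqr => ?_) (fun hr => ?_)).trans ?_
    · rw [key q]
      split
      · exact DFinsupp.single_eq_of_ne hqr.symm
      · rfl
    · have : x r = 0 := DFinsupp.notMem_support_iff.mp hr
      rw [key r]
      split <;> simp [this]
    · rw [key r]
  rw [hsum]
  split
  · exact DFinsupp.single_eq_same
  · rfl


lemma ginv_comp {a b c : G} (f : a ⟶ b) (g : b ⟶ c) :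
    Groupoid.inv (f ≫ g) = Groupoid.inv g ≫ Groupoid.inv f := by
  simp [Groupoid.inv_eq_inv]

lemma ginv_id (a : G) : Groupoid.inv (𝟙 a) = 𝟙 a := by
  simp [Groupoid.inv_eq_inv]

lemma ginv_inv {a b : G} (f : a ⟶ b) : Groupoid.inv (Groupoid.inv f) = f := by
  simp [Groupoid.inv_eq_inv]

variable {e : G} (sm : e ⟶ e)

/-- the normal subgroupoid generated by `sm` -/
noncomputable def NN (g : G) : Subgroup (g ⟶ g) :=
  Subgroup.closure { n : g ⟶ g | ∃ w : g ⟶ e, n = w ≫ sm ≫ Groupoid.inv w }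

lemma sm_mem_NN : sm ∈ NN sm e := by
  refine Subgroup.subset_closure ⟨𝟙 e, ?_⟩
  simp [ginv_id]

lemma NN_conj {g h : G} (t : g ⟶ h) (n : h ⟶ h) (hn : n ∈ NN sm h) :
    t ≫ n ≫ Groupoid.inv t ∈ NN sm g := by
  induction hn using Subgroup.closure_induction with
  | mem x hx =>
    obtain ⟨w, rfl⟩ := hx
    refine Subgroup.subset_closure ⟨t ≫ w, ?_⟩
    simp [ginv_comp, Category.assoc]
  | one =>
    have : t ≫ (1 : h ⟶ h) ≫ Groupoid.inv t = 𝟙 g := by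
      show t ≫ 𝟙 h ≫ Groupoid.inv t = 𝟙 g
      simp [Groupoid.comp_inv]
    rw [this]
    exact one_mem _
  | mul x y hx hy ihx ihy =>
    have : t ≫ (x * y) ≫ Groupoid.inv t
        = (t ≫ x ≫ Groupoid.inv t) * (t ≫ y ≫ Groupoid.inv t) := by
      show t ≫ (x ≫ y) ≫ Groupoid.inv t
        = (t ≫ x ≫ Groupoid.inv t) ≫ (t ≫ y ≫ Groupoid.inv t)
      simp [Groupoid.inv_eq_inv, Category.assoc]
    rw [this]
    exact mul_mem ihx ihy
  | inv x hx ih =>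
    have : t ≫ x⁻¹ ≫ Groupoid.inv t = (t ≫ x ≫ Groupoid.inv t)⁻¹ := by
      show t ≫ Groupoid.inv x ≫ Groupoid.inv t
        = Groupoid.inv (t ≫ x ≫ Groupoid.inv t)
      simp [ginv_comp, ginv_inv, Category.assoc]
    rw [this]
    exact inv_mem ih

lemma NN_sigma (hσ1 : ∀ e : G, σ e e (𝟙 e) = RingHom.id D)
    (hσcomp : ∀ (e f g : G) (s : e ⟶ f) (t : f ⟶ g),
      σ e g (s ≫ t) = (σ f g t).comp (σ e f s))
    (hσs : ∀ a : D, σ e e sm a = a)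
    {g : G} (n : g ⟶ g) (hn : n ∈ NN sm g) : ∀ a : D, σ g g n a = a := by
  induction hn using Subgroup.closure_induction with
  | mem x hx =>
    obtain ⟨w, rfl⟩ := hx
    intro a
    have h1 : σ g g (w ≫ sm ≫ Groupoid.inv w) a
        = σ e g (Groupoid.inv w) (σ e e sm (σ g e w a)) := by
      rw [hσcomp g e g w (sm ≫ Groupoid.inv w), hσcomp e e g sm (Groupoid.inv w)]
      rfl
    rw [h1, hσs]
    have h2 : σ e g (Groupoid.inv w) (σ g e w a) = σ g g (w ≫ Groupoid.inv w) a := by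
      rw [hσcomp g e g w (Groupoid.inv w)]; rfl
    rw [h2, Groupoid.comp_inv, hσ1]; rfl
  | one =>
    intro a
    show σ g g (𝟙 g) a = a
    rw [hσ1]; rfl
  | mul x y hx hy ihx ihy =>
    intro a
    show σ g g (x ≫ y) a = a
    rw [hσcomp g g g x y]
    simpa [ihx a] using ihy _
  | inv x hx ih =>
    intro a
    show σ g g (Groupoid.inv x) a = a
    have h1 : σ g g (x ≫ Groupoid.inv x) a = a := by rw [Groupoid.comp_inv, hσ1]; rfl
    rw [hσcomp g g g x (Groupoid.inv x)] at h1
    calc σ g g (Groupoid.inv x) a = σ g g (Groupoid.inv x) (σ g g x a) := by rw [ih a]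
    _ = a := h1

/-- equivalence classes modulo the normal subgroupoid -/
def MRel (q p : CMor G) : Prop :=
  ∃ n ∈ NN sm q.2.1, p = ⟨q.1, q.2.1, q.2.2 ≫ n⟩

lemma MRel_refl (q : CMor G) : MRel sm q q :=
  ⟨𝟙 q.2.1, one_mem _, by rw [Category.comp_id]⟩

lemma MRel_fst {q p : CMor G} (h : MRel sm q p) : p.1 = q.1 := by
  obtain ⟨n, _, rfl⟩ := h; rfl

lemma MRel_snd {q p : CMor G} (h : MRel sm q p) : p.2.1 = q.2.1 := by
  obtain ⟨n, _, rfl⟩ := h; rfl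

noncomputable def phi (q : CMor G) : CP (fun _ : G => D) →+ D :=
  DFinsupp.sumAddHom (fun p => if MRel sm q p then AddMonoidHom.id D else 0)

lemma phi_single (q p : CMor G) (b : D) :
    phi (D := D) sm q (DFinsupp.single p b) = if MRel sm q p then b else 0 := by
  unfold phi
  rw [DFinsupp.sumAddHom_single]
  split <;> rfl

lemma phi_apply (q : CMor G) (y : CP (fun _ : G => D)) :
    phi (D := D) sm q y = ∑ p ∈ y.support, (if MRel sm q p then y p else 0) := by
  unfold phi
  rw [DFinsupp.sumAddHom_apply, DFinsupp.sum]
  refine Finset.sum_congr rfl fun p _ => ?_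
  split <;> rfl


lemma phi_cmul_left
    (hσ1 : ∀ e : G, σ e e (𝟙 e) = RingHom.id D)
    (hσcomp : ∀ (e f g : G) (s : e ⟶ f) (t : f ⟶ g),
      σ e g (s ≫ t) = (σ f g t).comp (σ e f s))
    (hσs : ∀ a : D, σ e e sm a = a)
    (r y : CP (fun _ : G => D)) (hy : ∀ q, phi (D := D) sm q y = 0) (q : CMor G) :
    phi (D := D) sm q (cmul σ r y) = 0 := by
  rw [cmul_eq, map_dfinsuppSum]
  rw [DFinsupp.sum]
  refine Finset.sum_eq_zero fun p hp => ?_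
  rw [map_dfinsuppSum, DFinsupp.sum]
  obtain ⟨pd, pc, pm⟩ := p
  by_cases hc : q.2.1 = pc
  · obtain ⟨qd, qc, qm⟩ := q
    dsimp only at hc
    subst hc
    have key : ∀ i ∈ y.support,
        (phi (D := D) sm ⟨qd, qc, qm⟩)
          (if h : i.2.1 = pd then
            (DFinsupp.single (⟨i.1, qc, (i.2.2 ≫ eqToHom h) ≫ pm⟩ : CMor G)
              (r ⟨pd, qc, pm⟩ * σ pd qc pm (y i)) : CP (fun _ : G => D))
          else 0)
        = r ⟨pd, qc, pm⟩ * σ pd qc pm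
            (if MRel sm (⟨qd, pd, qm ≫ Groupoid.inv pm⟩ : CMor G) i then y i else 0) := by
      rintro ⟨wd, wc, wm⟩ _
      dsimp only
      by_cases h : wc = pd
      · subst h
        rw [dif_pos rfl]
        have hidx : (⟨wd, qc, (wm ≫ eqToHom rfl) ≫ pm⟩ : CMor G) = ⟨wd, qc, wm ≫ pm⟩ := by
          simp
        rw [hidx, phi_single]
        have hiff : MRel sm (⟨qd, qc, qm⟩ : CMor G) ⟨wd, qc, wm ≫ pm⟩ ↔
            MRel sm (⟨qd, wc, qm ≫ Groupoid.inv pm⟩ : CMor G) ⟨wd, wc, wm⟩ := by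
          constructor
          · rintro ⟨n, hn, heq⟩
            have hwd : wd = qd := congrArg (fun z : CMor G => z.1) heq
            subst hwd
            have h3 : wm ≫ pm = qm ≫ n := cmor_mk_inj heq
            refine ⟨pm ≫ n ≫ Groupoid.inv pm, NN_conj sm pm n hn, cmor_mk_congr ?_⟩
            have hwm : wm = (qm ≫ n) ≫ Groupoid.inv pm := by
              rw [← h3]; simp [Groupoid.inv_eq_inv]
            rw [hwm]
            simp [Groupoid.inv_eq_inv, Category.assoc]
          · rintro ⟨n, hn, heq⟩
            have hwd : wd = qd := congrArg (fun z : CMor G => z.1) heq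
            subst hwd
            have h3 : wm = (qm ≫ Groupoid.inv pm) ≫ n := cmor_mk_inj heq
            refine ⟨Groupoid.inv pm ≫ n ≫ pm, ?_, cmor_mk_congr ?_⟩
            · have := NN_conj sm (Groupoid.inv pm) n hn
              rwa [ginv_inv] at this
            · rw [h3]
              simp [Groupoid.inv_eq_inv, Category.assoc]
        rw [if_congr hiff rfl rfl]
        split
        · rfl
        · rw [map_zero, mul_zero]
      · rw [dif_neg h, map_zero]
        have hnot : ¬ MRel sm (⟨qd, pd, qm ≫ Groupoid.inv pm⟩ : CMor G) ⟨wd, wc, wm⟩ :=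
          fun hrel => h (MRel_snd sm hrel)
        rw [if_neg hnot, map_zero, mul_zero]
    rw [Finset.sum_congr rfl key, ← Finset.mul_sum, ← map_sum, ← phi_apply, hy, map_zero,
      mul_zero]
  · refine Finset.sum_eq_zero fun q' _ => ?_
    obtain ⟨wd, wc, wm⟩ := q'
    dsimp only
    split
    · next h =>
      rw [phi_single, if_neg]
      intro hrel
      exact hc (MRel_snd sm hrel).symm
    · exact map_zero _

lemma phi_cmul_right
    (hσ1 : ∀ e : G, σ e e (𝟙 e) = RingHom.id D)
    (hσcomp : ∀ (e f g : G) (s : e ⟶ f) (t : f ⟶ g),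
      σ e g (s ≫ t) = (σ f g t).comp (σ e f s))
    (hσs : ∀ a : D, σ e e sm a = a)
    (r y : CP (fun _ : G => D)) (hy : ∀ q, phi (D := D) sm q y = 0) (q : CMor G) :
    phi (D := D) sm q (cmul σ y r) = 0 := by
  rw [cmul_eq, map_dfinsuppSum, DFinsupp.sum]
  simp only [DFinsupp.sum, map_sum]
  rw [Finset.sum_comm]
  refine Finset.sum_eq_zero fun q' hq' => ?_
  obtain ⟨wd, wc, wm⟩ := q'
  by_cases hd : q.1 = wd
  · obtain ⟨qd, qc, qm⟩ := q
    dsimp only at hd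
    subst hd
    have key : ∀ i ∈ y.support,
        (phi (D := D) sm ⟨qd, qc, qm⟩)
          (if h : wc = i.1 then
            (DFinsupp.single (⟨qd, i.2.1, (wm ≫ eqToHom h) ≫ i.2.2⟩ : CMor G)
              (y i * σ i.1 i.2.1 i.2.2 (r ⟨qd, wc, wm⟩)) : CP (fun _ : G => D))
          else 0)
        = (if MRel sm (⟨wc, qc, Groupoid.inv wm ≫ qm⟩ : CMor G) i then y i else 0) *
            σ wc qc (Groupoid.inv wm ≫ qm) (r ⟨qd, wc, wm⟩) := by
      rintro ⟨pd, pc, pm⟩ _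
      dsimp only
      by_cases h : wc = pd
      · subst h
        rw [dif_pos rfl]
        have hidx : (⟨qd, pc, (wm ≫ eqToHom rfl) ≫ pm⟩ : CMor G) = ⟨qd, pc, wm ≫ pm⟩ := by
          simp
        rw [hidx, phi_single]
        by_cases hrel : MRel sm (⟨wc, qc, Groupoid.inv wm ≫ qm⟩ : CMor G) ⟨wc, pc, pm⟩
        · obtain ⟨n, hn, heq⟩ := hrel
          have hpc : pc = qc := congrArg (fun z : CMor G => z.2.1) heq
          subst hpc
          have hpm : pm = (Groupoid.inv wm ≫ qm) ≫ n := cmor_mk_inj heq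
          subst hpm
          have hrel2 : MRel sm (⟨qd, pc, qm⟩ : CMor G)
              ⟨qd, pc, wm ≫ (Groupoid.inv wm ≫ qm) ≫ n⟩ := by
            refine ⟨n, hn, cmor_mk_congr ?_⟩
            simp [Groupoid.inv_eq_inv, Category.assoc]
          rw [if_pos hrel2, if_pos ⟨n, hn, rfl⟩]
          congr 1
          have hcomp : σ wc pc ((Groupoid.inv wm ≫ qm) ≫ n) (r ⟨qd, wc, wm⟩)
              = σ pc pc n (σ wc pc (Groupoid.inv wm ≫ qm) (r ⟨qd, wc, wm⟩)) := by
            rw [hσcomp wc pc pc (Groupoid.inv wm ≫ qm) n]; rfl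
          rw [hcomp, NN_sigma σ sm hσ1 hσcomp hσs n hn]
        · have hnot : ¬ MRel sm (⟨qd, qc, qm⟩ : CMor G) ⟨qd, pc, wm ≫ pm⟩ := by
            rintro ⟨n, hn, heq⟩
            have hpc : pc = qc := congrArg (fun z : CMor G => z.2.1) heq
            subst hpc
            have h3 : wm ≫ pm = qm ≫ n := cmor_mk_inj heq
            refine hrel ⟨n, hn, cmor_mk_congr ?_⟩
            have : pm = Groupoid.inv wm ≫ wm ≫ pm := by
              simp [Groupoid.inv_eq_inv]
            rw [this, h3]
            simp [Category.assoc]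
          rw [if_neg hnot, if_neg hrel, zero_mul]
      · rw [dif_neg h, map_zero]
        have hnot : ¬ MRel sm (⟨wc, qc, Groupoid.inv wm ≫ qm⟩ : CMor G) ⟨pd, pc, pm⟩ :=
          fun hrel => h (MRel_fst sm hrel).symm
        rw [if_neg hnot, zero_mul]
    rw [Finset.sum_congr rfl key, ← Finset.sum_mul, ← phi_apply, hy, zero_mul]
  · refine Finset.sum_eq_zero fun i _ => ?_
    dsimp only
    split
    · next h =>
      rw [phi_single, if_neg]
      intro hrel
      exact hd (MRel_fst sm hrel).symm
    · exact map_zero _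


lemma MRel_id_iff_s (q : CMor G) :
    MRel sm q ⟨e, e, 𝟙 e⟩ ↔ MRel sm q ⟨e, e, sm⟩ := by
  constructor
  · rintro ⟨n, hn, heq⟩
    obtain ⟨qd, qc, qm⟩ := q
    have h1 : e = qd := congrArg (fun z : CMor G => z.1) heq
    subst h1
    have h2 : e = qc := congrArg (fun z : CMor G => z.2.1) heq
    subst h2
    have h3 : 𝟙 e = qm ≫ n := cmor_mk_inj heq
    refine ⟨n * sm, mul_mem hn (sm_mem_NN sm), cmor_mk_congr ?_⟩
    show sm = qm ≫ (n ≫ sm)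
    rw [← Category.assoc, ← h3, Category.id_comp]
  · rintro ⟨n, hn, heq⟩
    obtain ⟨qd, qc, qm⟩ := q
    have h1 : e = qd := congrArg (fun z : CMor G => z.1) heq
    subst h1
    have h2 : e = qc := congrArg (fun z : CMor G => z.2.1) heq
    subst h2
    have h3 : sm = qm ≫ n := cmor_mk_inj heq
    refine ⟨n * sm⁻¹, mul_mem hn (inv_mem (sm_mem_NN sm)), cmor_mk_congr ?_⟩
    show 𝟙 e = qm ≫ (n ≫ Groupoid.inv sm)
    rw [← Category.assoc, ← h3, Groupoid.comp_inv]

lemma phi_id_apply (y : CP (fun _ : G => D))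
    (hA : ∀ p : CMor G, (∀ g : G, p ≠ ⟨g, g, 𝟙 g⟩) → y p = 0) (g : G) :
    phi (D := D) sm ⟨g, g, 𝟙 g⟩ y = y ⟨g, g, 𝟙 g⟩ := by
  rw [phi_apply]
  refine (Finset.sum_eq_single (⟨g, g, 𝟙 g⟩ : CMor G)
    (fun p hp hne => ?_) (fun hns => ?_)).trans ?_
  · by_cases hrel : MRel sm (⟨g, g, 𝟙 g⟩ : CMor G) p
    · rw [if_pos hrel]
      by_cases hid : ∃ h : G, p = ⟨h, h, 𝟙 h⟩
      · obtain ⟨h, rfl⟩ := hid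
        have h1 : h = g := MRel_fst sm hrel
        subst h1
        exact absurd rfl hne
      · exact hA p (fun h hh => hid ⟨h, hh⟩)
    · rw [if_neg hrel]
  · rw [if_pos (MRel_refl sm _), DFinsupp.notMem_support_iff.mp hns]
  · rw [if_pos (MRel_refl sm _)]


lemma mpr_direction
    (hσ1 : ∀ e : G, σ e e (𝟙 e) = RingHom.id D)
    (hσcomp : ∀ (e f g : G) (s : e ⟶ f) (t : f ⟶ g),
      σ e g (s ≫ t) = (σ f g t).comp (σ e f s))
    [IsDomain D]
    (hideal : ∀ I : Set (CP (fun _ : G => D)),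
      IsCrossedIdeal (A := fun _ : G => D) σ (fun _ _ _ _ _ => 1) I →
      (∃ y ∈ I, y ≠ 0) →
      ∃ y ∈ I, y ≠ 0 ∧ ∀ p : CMor G, (∀ e : G, p ≠ ⟨e, e, 𝟙 e⟩) → y p = 0)
    (x : CP (fun _ : G => D))
    (hxcomm : ∀ (g : G) (a : D),
      cmul σ x (DFinsupp.single ⟨g, g, 𝟙 g⟩ a)
        = cmul σ (DFinsupp.single ⟨g, g, 𝟙 g⟩ a) x)
    (p : CMor G) (hpne : ∀ e : G, p ≠ ⟨e, e, 𝟙 e⟩) : x p = 0 := by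
  by_contra hxp
  have hc : ∀ (g : G) (a : D) (r : CMor G),
      (if r.1 = g then x r * σ r.1 r.2.1 r.2.2 a else 0)
        = (if r.2.1 = g then a * x r else 0) := by
    intro g a r
    have h2 : cmul σ x (DFinsupp.single ⟨g, g, 𝟙 g⟩ a) r
        = cmul σ (DFinsupp.single ⟨g, g, 𝟙 g⟩ a) x r :=
      congrArg (fun z : CP (fun _ : G => D) => z r) (hxcomm g a)
    rwa [cmul_apply_id_right, cmul_apply_id_left σ hσ1] at h2
  obtain ⟨pd, pc, pm⟩ := p
  have hpc : pc = pd := by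
    have h3 := hc pd 1 ⟨pd, pc, pm⟩
    dsimp only at h3
    rw [if_pos rfl, map_one, mul_one] at h3
    by_contra hne
    rw [if_neg hne] at h3
    exact hxp h3
  subst hpc
  have hsne : pm ≠ 𝟙 pc := by
    intro h
    exact (hpne pc) (by rw [h])
  have hσs : ∀ a : D, σ pc pc pm a = a := by
    intro a
    have h3 := hc pc a ⟨pc, pc, pm⟩
    dsimp only at h3
    rw [if_pos rfl, if_pos rfl] at h3
    have h4 : x ⟨pc, pc, pm⟩ * σ pc pc pm a = x ⟨pc, pc, pm⟩ * a := by
      rw [h3, mul_comm]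
    exact mul_left_cancel₀ hxp h4
  set I : Set (CP (fun _ : G => D)) := {z | ∀ q : CMor G, phi (D := D) pm q z = 0} with hI
  have hIcr : IsCrossedIdeal (A := fun _ : G => D) σ (fun _ _ _ _ _ => 1) I := by
    refine ⟨fun q => map_zero _, fun a b ha hb q => ?_, fun a ha q => ?_, fun z r hz => ?_⟩
    · rw [map_add, ha q, hb q, add_zero]
    · rw [map_neg, ha q, neg_zero]
    · exact ⟨fun q => phi_cmul_left σ pm hσ1 hσcomp hσs r z hz q,
        fun q => phi_cmul_right σ pm hσ1 hσcomp hσs r z hz q⟩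
  set b0 : CP (fun _ : G => D) :=
    DFinsupp.single (⟨pc, pc, 𝟙 pc⟩ : CMor G) (1 : D)
      - DFinsupp.single (⟨pc, pc, pm⟩ : CMor G) (1 : D) with hb0
  have hb0I : b0 ∈ I := by
    intro q
    rw [hb0, map_sub, phi_single, phi_single,
      if_congr (MRel_id_iff_s pm q) rfl rfl, sub_self]
  have hb0ne : b0 ≠ 0 := by
    intro h
    have h2 := congrArg (fun z : CP (fun _ : G => D) => z ⟨pc, pc, 𝟙 pc⟩) h
    rw [hb0] at h2
    dsimp only at h2
    rw [DFinsupp.sub_apply, DFinsupp.single_eq_same,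
      DFinsupp.single_eq_of_ne (fun (hh : (⟨pc, pc, 𝟙 pc⟩ : CMor G) = ⟨pc, pc, pm⟩) => hsne (cmor_mk_inj hh.symm)), sub_zero] at h2
    exact one_ne_zero h2
  obtain ⟨z, hzI, hzne, hzid⟩ := hideal I hIcr ⟨b0, hb0I, hb0ne⟩
  apply hzne
  ext q
  show z q = 0
  by_cases hid : ∃ g : G, q = ⟨g, g, 𝟙 g⟩
  · obtain ⟨g, rfl⟩ := hid
    rw [← phi_id_apply pm z hzid g]
    exact hzI ⟨g, g, 𝟙 g⟩
  · exact hzid q (fun g hq => hid ⟨g, hq⟩)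


lemma mp_direction
    (hσ1 : ∀ e : G, σ e e (𝟙 e) = RingHom.id D)
    (hmax : ∀ x : CP (fun _ : G => D),
      (∀ (g : G) (a : D),
        cmul σ x (DFinsupp.single ⟨g, g, 𝟙 g⟩ a)
          = cmul σ (DFinsupp.single ⟨g, g, 𝟙 g⟩ a) x) →
      ∀ p : CMor G, (∀ e : G, p ≠ ⟨e, e, 𝟙 e⟩) → x p = 0)
    (I : Set (CP (fun _ : G => D)))
    (hI : IsCrossedIdeal (A := fun _ : G => D) σ (fun _ _ _ _ _ => 1) I)
    (hne : ∃ y ∈ I, y ≠ 0) :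
    ∃ y ∈ I, y ≠ 0 ∧ ∀ p : CMor G, (∀ e : G, p ≠ ⟨e, e, 𝟙 e⟩) → y p = 0 := by
  obtain ⟨hzero, hadd, hneg, hmul⟩ := hI
  have hsub : ∀ a b, a ∈ I → b ∈ I → a - b ∈ I := fun a b ha hb => by
    rw [sub_eq_add_neg]; exact hadd _ _ ha (hneg _ hb)
  obtain ⟨x0, hx0I, hx0⟩ := hne
  have hSne : {n : ℕ | ∃ z ∈ I, z ≠ 0 ∧ z.support.card = n}.Nonempty :=
    ⟨_, x0, hx0I, hx0, rfl⟩
  obtain ⟨x, hxI, hxne, hxcard⟩ := Nat.sInf_mem hSne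
  have hmin : ∀ z, z ∈ I → z ≠ 0 → x.support.card ≤ z.support.card := by
    intro z hz hzne
    rw [hxcard]
    exact Nat.sInf_le ⟨z, hz, hzne, rfl⟩
  have hsupp_ne : x.support.Nonempty := by
    rw [Finset.nonempty_iff_ne_empty]
    intro h
    exact hxne (DFinsupp.support_eq_empty.mp h)
  obtain ⟨⟨f, e, sm⟩, hs0⟩ := hsupp_ne
  have hxs0 : x ⟨f, e, sm⟩ ≠ 0 := DFinsupp.mem_support_iff.mp hs0
  -- x' = u_e x u_f
  set x1 := cmul σ x (DFinsupp.single (⟨f, f, 𝟙 f⟩ : CMor G) (1 : D)) with hx1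
  set x' := cmul σ (DFinsupp.single (⟨e, e, 𝟙 e⟩ : CMor G) (1 : D)) x1 with hx'
  have hx'I : x' ∈ I := (hmul _ _ ((hmul _ _ hxI).2)).1
  have hx'app : ∀ r : CMor G,
      x' r = if r.2.1 = e then (if r.1 = f then x r else 0) else 0 := by
    intro r
    rw [hx', cmul_apply_id_left σ hσ1 x1 e 1 r, hx1, cmul_apply_id_right σ x f 1 r]
    by_cases h1 : r.2.1 = e <;> by_cases h2 : r.1 = f <;> simp [h1, h2]
  have hx's0 : x' ⟨f, e, sm⟩ = x ⟨f, e, sm⟩ := by rw [hx'app]; simp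
  have hx'ne : x' ≠ 0 := fun h => hxs0 (by rw [← hx's0, h]; rfl)
  have hx'sub : x'.support ⊆ x.support := by
    intro r hr
    rw [DFinsupp.mem_support_iff] at hr ⊢
    intro h
    apply hr
    rw [hx'app]
    split
    · split
      · exact h
      · rfl
    · rfl
  have hsupp_eq : x'.support = x.support :=
    Finset.eq_of_subset_of_card_le hx'sub (hmin x' hx'I hx'ne)
  have hx_shape : ∀ p ∈ x.support, p.2.1 = e ∧ p.1 = f := by
    intro p hp
    rw [← hsupp_eq, DFinsupp.mem_support_iff] at hp
    rw [hx'app p] at hp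
    by_cases h1 : p.2.1 = e
    · by_cases h2 : p.1 = f
      · exact ⟨h1, h2⟩
      · rw [if_pos h1, if_neg h2] at hp; exact absurd rfl hp
    · rw [if_neg h1] at hp; exact absurd rfl hp
  -- y = x * u_{inv sm}
  set m := Groupoid.inv sm with hm
  set y := cmul σ x (DFinsupp.single (⟨e, f, m⟩ : CMor G) (1 : D)) with hy
  have hyI : y ∈ I := (hmul _ _ hxI).2
  have hyF : y = x.sum fun p a =>
      if h : f = p.1 then
        (DFinsupp.single (⟨e, p.2.1, (m ≫ eqToHom h) ≫ p.2.2⟩ : CMor G) a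
          : CP (fun _ : G => D))
      else 0 := by
    rw [hy, cmul_single_right]
    refine Finset.sum_congr rfl fun p _ => ?_
    dsimp only
    split
    · rw [map_one, mul_one]
    · rfl
  have hy1 : y ⟨e, e, 𝟙 e⟩ = x ⟨f, e, sm⟩ := by
    rw [hyF, DFinsupp.sum_apply, DFinsupp.sum]
    refine (Finset.sum_eq_single (⟨f, e, sm⟩ : CMor G)
      (fun p hp hne' => ?_) (fun hns => absurd hs0 hns)).trans ?_
    · obtain ⟨he', hf'⟩ := hx_shape p hp
      obtain ⟨p1, p2, pm⟩ := p
      dsimp only at he' hf' ⊢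
      have he2 := he'.symm
      have hf2 := hf'.symm
      subst he2
      subst hf2
      rw [dif_pos rfl]
      refine DFinsupp.single_eq_of_ne ?_
      intro hidx
      apply hne'
      have h3 : (m ≫ eqToHom rfl) ≫ pm = 𝟙 e := cmor_mk_inj hidx.symm
      have h4 : pm = sm := by
        rw [eqToHom_refl, Category.comp_id, hm] at h3
        calc pm = sm ≫ Groupoid.inv sm ≫ pm := by simp [Groupoid.inv_eq_inv]
        _ = sm ≫ 𝟙 e := by rw [h3]
        _ = sm := Category.comp_id sm
      rw [h4]
    · rw [dif_pos rfl]
      have hidx : (⟨e, e, (m ≫ eqToHom rfl) ≫ sm⟩ : CMor G) = ⟨e, e, 𝟙 e⟩ := by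
        refine cmor_mk_congr ?_
        rw [eqToHom_refl, Category.comp_id, hm, Groupoid.inv_comp]
      rw [hidx, DFinsupp.single_eq_same]
  have hyne : y ≠ 0 := fun h => hxs0 (by rw [← hy1, h]; rfl)
  have hysupp : ∀ r ∈ y.support, ∃ p ∈ x.support,
      ∃ h : f = p.1, r = ⟨e, p.2.1, (m ≫ eqToHom h) ≫ p.2.2⟩ := by
    intro r hr
    rw [hyF] at hr
    obtain ⟨p, hp, hrp⟩ := Finset.mem_biUnion.mp (DFinsupp.support_sum hr)
    by_cases h : f = p.1
    · rw [dif_pos h] at hrp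
      have := DFinsupp.support_single_subset hrp
      exact ⟨p, hp, h, Finset.mem_singleton.mp this⟩
    · rw [dif_neg h] at hrp
      simp at hrp
  have hy_shape : ∀ r ∈ y.support, r.1 = e ∧ r.2.1 = e := by
    intro r hr
    obtain ⟨p, hp, h, rfl⟩ := hysupp r hr
    exact ⟨rfl, (hx_shape p hp).1⟩
  have hycard : y.support.card ≤ x.support.card := by
    classical
    have hsub2 : y.support ⊆ x.support.image (fun p : CMor G =>
        if h : f = p.1 then (⟨e, p.2.1, (m ≫ eqToHom h) ≫ p.2.2⟩ : CMor G) else p) := by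
      intro r hr
      obtain ⟨p, hp, h, rfl⟩ := hysupp r hr
      refine Finset.mem_image.mpr ⟨p, hp, ?_⟩
      rw [dif_pos h]
    calc y.support.card ≤ _ := Finset.card_le_card hsub2
    _ ≤ x.support.card := Finset.card_image_le
  have h1mem : (⟨e, e, 𝟙 e⟩ : CMor G) ∈ y.support :=
    DFinsupp.mem_support_iff.mpr (by rw [hy1]; exact hxs0)
  have hcomm : ∀ (g : G) (a : D),
      cmul σ y (DFinsupp.single ⟨g, g, 𝟙 g⟩ a)
        = cmul σ (DFinsupp.single ⟨g, g, 𝟙 g⟩ a) y := by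
    intro g a
    set d := cmul σ y (DFinsupp.single ⟨g, g, 𝟙 g⟩ a)
      - cmul σ (DFinsupp.single ⟨g, g, 𝟙 g⟩ a) y with hd
    have hdI : d ∈ I := hsub _ _ (hmul _ _ hyI).2 (hmul _ _ hyI).1
    have hdapp : ∀ r, d r = (if r.1 = g then y r * σ r.1 r.2.1 r.2.2 a else 0)
        - (if r.2.1 = g then a * y r else 0) := by
      intro r
      rw [hd, DFinsupp.sub_apply, cmul_apply_id_right, cmul_apply_id_left σ hσ1]
    have hdsub : d.support ⊆ y.support.erase ⟨e, e, 𝟙 e⟩ := by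
      intro r hr
      rw [DFinsupp.mem_support_iff] at hr
      refine Finset.mem_erase.mpr ⟨?_, ?_⟩
      · rintro rfl
        apply hr
        rw [hdapp]
        dsimp only
        by_cases hge : e = g
        · rw [if_pos hge, if_pos hge, hσ1]
          dsimp only [RingHom.id_apply]
          rw [mul_comm, sub_self]
        · rw [if_neg hge, if_neg hge, sub_self]
      · rw [DFinsupp.mem_support_iff]
        intro h0
        apply hr
        rw [hdapp, h0]
        simp
    have hdcard : d.support.card < x.support.card := by
      have h1 : d.support.card ≤ y.support.card - 1 := by
        have h2 := Finset.card_le_card hdsub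
        rwa [Finset.card_erase_of_mem h1mem] at h2
      have h2 : 0 < y.support.card := Finset.card_pos.mpr ⟨_, h1mem⟩
      omega
    have hd0 : d = 0 := by
      by_contra hdne
      exact absurd (hmin d hdI hdne) (not_le.mpr hdcard)
    rw [hd] at hd0
    exact sub_eq_zero.mp hd0
  exact ⟨y, hyI, hyne, hmax y hcomm⟩

end Dev


/-- for a skew groupoid ring `A ⋊^σ G` over a groupoid with
finitely many objects, all coefficient rings equal to a fixed integral domain
`D` and abelian isotropy groups, `A` is maximal commutative in `A ⋊^σ G` iff
every nonzero twosided ideal of `A ⋊^σ G` meets `A` nontrivially. -/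
theorem skew_groupoid_ring_maximal_commutative_iff_ideals_intersect
    {G : Type*} [Groupoid G] [Finite G] {D : Type*} [CommRing D] [IsDomain D]
    (σ : ∀ e f : G, (e ⟶ f) → (D →+* D))
    (hσ1 : ∀ e : G, σ e e (𝟙 e) = RingHom.id D)
    (hσcomp : ∀ (e f g : G) (s : e ⟶ f) (t : f ⟶ g),
      σ e g (s ≫ t) = (σ f g t).comp (σ e f s))
    (habel : ∀ (e : G) (s t : e ⟶ e), s ≫ t = t ≫ s) :
    (∀ x : CP (fun _ : G => D),
      (∀ (e : G) (a : D),
        catMul (A := fun _ : G => D) σ (fun _ _ _ _ _ => 1) x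
            (catSingle (A := fun _ : G => D) ⟨e, e, 𝟙 e⟩ a)
          = catMul (A := fun _ : G => D) σ (fun _ _ _ _ _ => 1)
            (catSingle (A := fun _ : G => D) ⟨e, e, 𝟙 e⟩ a) x) →
      ∀ p : CMor G, (∀ e : G, p ≠ ⟨e, e, 𝟙 e⟩) → x p = 0) ↔
    (∀ I : Set (CP (fun _ : G => D)),
      IsCrossedIdeal (A := fun _ : G => D) σ (fun _ _ _ _ _ => 1) I →
      (∃ y ∈ I, y ≠ 0) →
      ∃ y ∈ I, y ≠ 0 ∧ ∀ p : CMor G, (∀ e : G, p ≠ ⟨e, e, 𝟙 e⟩) → y p = 0) := by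
  constructor
  · intro hmax I hI hne
    exact mp_direction σ hσ1 (fun x hcomm p hp => hmax x (fun g a => hcomm g a) p hp) I hI hne
  · intro hideal x hxcomm p hpne
    exact mpr_direction σ hσ1 hσcomp hideal x (fun g a => hxcomm g a) p hpne
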